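/- Fix λ > 0 and constants C1, C2 > 0. Let M = (S, A, s0, p, γ) be a finite discounted MDP without reward and π_E a stochastic policy with π_min := min_{(s,a)} π_E(a|s) > 0 and S_{M,π_E} = S. If C2 ≥ λ log(1/π_min), and r̄ ∈ ℝ^{S×A} is defined componentwise by r̄(s,a) := ∫_{𝒮R^{MCE}_M ∩ R^{MCE,S}_{M,π_E}} r(s,a) dH^{|S|}(r), the integral with respect to |S|-dimensional Hausdorff measure on ℝ^{S×A}, then there exist α > 0 and β ∈ ℝ such that α·r̄(s,a) + β = log π_E(a|s) for all (s,a) ∈ S×A. -/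

import Mathlib

open scoped ENNReal

open scoped BigOperators
open MeasureTheory

/-- A finite discounted MDP without reward. -/
structure MDP (S A : Type) [Fintype S] [Fintype A] where
  s0 : S
  p : S → A → S → ℝ
  p_nonneg : ∀ s a s', 0 ≤ p s a s'
  p_sum_one : ∀ s a, ∑ s', p s a s' = 1
  disc : ℝ
  disc_nonneg : 0 ≤ disc
  disc_lt_one : disc < 1

section Defs

variable {S A : Type} [Fintype S] [Fintype A] [DecidableEq S] [DecidableEq A]

/-- `π` is a (stochastic) policy: each `π s` is a probability distribution on actions. -/
def IsPolicy (π : S → A → ℝ) : Prop :=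
  (∀ s a, 0 ≤ π s a) ∧ ∀ s, ∑ a, π s a = 1

open Classical in
/-- The stochastic policy induced by a deterministic policy `d`. -/
noncomputable def detPolicy (d : S → A) : S → A → ℝ :=
  fun s a => if a = d s then 1 else 0

/-- The state-transition matrix of a policy. -/
noncomputable def Pmat (M : MDP S A) (π : S → A → ℝ) : Matrix S S ℝ :=
  Matrix.of fun s s' => ∑ a, π s a * M.p s a s'

/-- The value function `V^π(s; p, r)`. -/
noncomputable def Vpi (M : MDP S A) (π : S → A → ℝ) (r : S × A → ℝ) (s : S) : ℝ :=
  ∑' t : ℕ, M.disc ^ t * ((Pmat M π ^ t).mulVec (fun s' => ∑ a, π s' a * r (s', a))) s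

/-- The optimal value function `V*(s; p, r)`. -/
noncomputable def Vstar (M : MDP S A) (r : S × A → ℝ) (s : S) : ℝ :=
  ⨆ π : {π : S → A → ℝ // IsPolicy π}, Vpi M π.1 r s

noncomputable def Qpi (M : MDP S A) (π : S → A → ℝ) (r : S × A → ℝ) (s : S) (a : A) : ℝ :=
  r (s, a) + M.disc * ∑ s', M.p s a s' * Vpi M π r s'

noncomputable def Api (M : MDP S A) (π : S → A → ℝ) (r : S × A → ℝ) (s : S) (a : A) : ℝ :=
  Qpi M π r s a - Vpi M π r s

noncomputable def Qstar (M : MDP S A) (r : S × A → ℝ) (s : S) (a : A) : ℝ :=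
  r (s, a) + M.disc * ∑ s', M.p s a s' * Vstar M r s'

noncomputable def Astar (M : MDP S A) (r : S × A → ℝ) (s : S) (a : A) : ℝ :=
  Qstar M r s a - Vstar M r s

/-- The soft (entropy-regularized) value function `V^π_λ(s; p, r)`. -/
noncomputable def VpiSoft (M : MDP S A) (lam : ℝ) (π : S → A → ℝ) (r : S × A → ℝ) (s : S) : ℝ :=
  ∑' t : ℕ, M.disc ^ t *
    ((Pmat M π ^ t).mulVec
      (fun s' => ∑ a, π s' a * (r (s', a) - lam * Real.log (π s' a)))) s

noncomputable def VstarSoft (M : MDP S A) (lam : ℝ) (r : S × A → ℝ) (s : S) : ℝ :=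
  ⨆ π : {π : S → A → ℝ // IsPolicy π}, VpiSoft M lam π.1 r s

noncomputable def QstarSoft (M : MDP S A) (lam : ℝ) (r : S × A → ℝ) (s : S) (a : A) : ℝ :=
  r (s, a) + M.disc * ∑ s', M.p s a s' * VstarSoft M lam r s'

noncomputable def AstarSoft (M : MDP S A) (lam : ℝ) (r : S × A → ℝ) (s : S) (a : A) : ℝ :=
  QstarSoft M lam r s a - VstarSoft M lam r s

/-- The OPT feasible set `R^{OPT,S̄}_{M,d}` of a deterministic policy `d`. -/
def ROPT (M : MDP S A) (Sbar : Set S) (d : S → A) : Set (S × A → ℝ) :=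
  {r | ∀ s ∈ Sbar, ∀ a, Qstar M r s a ≤ Qstar M r s (d s)}

/-- The MCE feasible set `R^{MCE,S}_{M,π}` (with `S̄ = S`). -/
def RMCE (M : MDP S A) (lam : ℝ) (π : S → A → ℝ) : Set (S × A → ℝ) :=
  {r | ∀ s a, π s a =
      Real.exp (QstarSoft M lam r s a / lam) / ∑ a', Real.exp (QstarSoft M lam r s a' / lam)}

/-- The BIRL feasible set `R^{BIRL,S}_{M,π}` (with `S̄ = S`). -/
def RBIRL (M : MDP S A) (bet : ℝ) (π : S → A → ℝ) : Set (S × A → ℝ) :=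
  {r | ∀ s a, π s a =
      Real.exp (Qstar M r s a / bet) / ∑ a', Real.exp (Qstar M r s a' / bet)}

open Classical in
/-- The matrix `W_{p,π}`. -/
noncomputable def Wmat (M : MDP S A) (π : S → A → ℝ) : Matrix S S ℝ :=
  Matrix.of fun s s' => (if s' = s then (1 : ℝ) else 0) - M.disc * ∑ a, π s a * M.p s a s'

/-- `k_π := |det W_{p,π}|^{-1/|S|}`. -/
noncomputable def kpi (M : MDP S A) (π : S → A → ℝ) : ℝ :=
  |(Wmat M π).det| ^ (-(1 : ℝ) / (Fintype.card S : ℝ))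

/-- `𝒮R^{OPT}_M`. -/
def SROPT (M : MDP S A) (C1 C2 : ℝ) : Set (S × A → ℝ) :=
  {r | ∀ π : S → A → ℝ, IsPolicy π → (∀ s, Vpi M π r s = Vstar M r s) →
      ∀ s a, |Vpi M π r s| ≤ C1 * kpi M π ∧ |Api M π r s a| ≤ C2}

/-- `𝒮R^{MCE}_M`. -/
def SRMCE (M : MDP S A) (lam C1 C2 : ℝ) : Set (S × A → ℝ) :=
  {r | ∀ s a, |VstarSoft M lam r s| ≤ C1 ∧ |AstarSoft M lam r s a| ≤ C2}

/-- `𝒮R^{BIRL}_M`. -/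
def SRBIRL (M : MDP S A) (C1 C2 : ℝ) : Set (S × A → ℝ) :=
  {r | ∀ s a, |Vstar M r s| ≤ C1 ∧ |Astar M r s a| ≤ C2}

/-- Discounted state occupancy `∑_{t≥0} γ^t P_{M,π}(s_t = s)`. -/
noncomputable def occ (M : MDP S A) (π : S → A → ℝ) (s : S) : ℝ :=
  ∑' t : ℕ, M.disc ^ t * (Pmat M π ^ t) M.s0 s

/-- The support `S_{M,π}` of a policy: states reachable with positive probability. -/
def supp (M : MDP S A) (π : S → A → ℝ) : Set S := {s | 0 < occ M π s}

end Defs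

/-- The unit hypercube `[-1,1]^{S×A}`. -/
def cube (S A : Type) [Fintype S] [Fintype A] : Set (S × A → ℝ) :=
  {r | ∀ sa, |r sa| ≤ 1}

namespace S8

set_option linter.unusedSectionVars false

variable {S A : Type} [Fintype S] [Fintype A] [DecidableEq S] [DecidableEq A]

lemma pE_le_one {πE : S → A → ℝ} (hπ : IsPolicy πE) (s : S) (a : A) : πE s a ≤ 1 :=
  calc πE s a ≤ ∑ a', πE s a' :=
        Finset.single_le_sum (fun a' _ => hπ.1 s a') (Finset.mem_univ a)
  _ = 1 := hπ.2 s

/-- row-stochastic matrices -/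
def RS (Q : Matrix S S ℝ) : Prop := (∀ s s', 0 ≤ Q s s') ∧ ∀ s, ∑ s', Q s s' = 1

lemma RS_Pmat (M : MDP S A) {π : S → A → ℝ} (hπ : IsPolicy π) : RS (Pmat M π) := by
  constructor
  · intro s s'
    exact Finset.sum_nonneg fun a _ => mul_nonneg (hπ.1 s a) (M.p_nonneg s a s')
  · intro s
    show ∑ s', ∑ a, π s a * M.p s a s' = 1
    rw [Finset.sum_comm]
    simp only [← Finset.mul_sum, M.p_sum_one, mul_one]
    exact hπ.2 s

lemma RS.mul {Q R : Matrix S S ℝ} (hQ : RS Q) (hR : RS R) : RS (Q * R) := by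
  constructor
  · intro s s'
    exact Finset.sum_nonneg fun u _ => mul_nonneg (hQ.1 s u) (hR.1 u s')
  · intro s
    show ∑ s', ∑ u, Q s u * R u s' = 1
    rw [Finset.sum_comm]
    simp only [← Finset.mul_sum]
    simp only [hR.2, mul_one]
    exact hQ.2 s

lemma RS.pow {Q : Matrix S S ℝ} (hQ : RS Q) (t : ℕ) : RS (Q ^ t) := by
  induction t with
  | zero =>
    rw [pow_zero]
    constructor
    · intro s s'
      by_cases h : s = s' <;> simp [Matrix.one_apply, h]
    · intro s; simp [Matrix.one_apply]
  | succ n ih =>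
    rw [pow_succ]
    exact ih.mul hQ

lemma RS.mulVec_abs_le {Q : Matrix S S ℝ} (hQ : RS Q) {c : S → ℝ} {R : ℝ}
    (hc : ∀ s, |c s| ≤ R) (s : S) : |Q.mulVec c s| ≤ R := by
  have h1 : |Q.mulVec c s| ≤ ∑ s', Q s s' * |c s'| := by
    refine (Finset.abs_sum_le_sum_abs _ _).trans ?_
    refine Finset.sum_le_sum fun s' _ => ?_
    rw [abs_mul, abs_of_nonneg (hQ.1 s s')]
  refine h1.trans ?_
  calc ∑ s', Q s s' * |c s'| ≤ ∑ s', Q s s' * R :=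
        Finset.sum_le_sum fun s' _ => mul_le_mul_of_nonneg_left (hc s') (hQ.1 s s')
  _ = R := by rw [← Finset.sum_mul, hQ.2 s, one_mul]

lemma RS.mulVec_le {Q : Matrix S S ℝ} (hQ : RS Q) {c c' : S → ℝ}
    (hc : ∀ s, c s ≤ c' s) (s : S) : Q.mulVec c s ≤ Q.mulVec c' s :=
  Finset.sum_le_sum fun s' _ => mul_le_mul_of_nonneg_left (hc s') (hQ.1 s s')

/-- the one-step soft reward of a policy -/
noncomputable def cpi (lam : ℝ) (π : S → A → ℝ) (r : S × A → ℝ) : S → ℝ :=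
  fun s' => ∑ a, π s' a * (r (s', a) - lam * Real.log (π s' a))

lemma VpiSoft_def (M : MDP S A) (lam : ℝ) (π : S → A → ℝ) (r : S × A → ℝ) (s : S) :
    VpiSoft M lam π r s = ∑' t : ℕ, M.disc ^ t * ((Pmat M π ^ t).mulVec (cpi lam π r)) s := rfl

lemma summable_series (M : MDP S A) {π : S → A → ℝ} (hπ : IsPolicy π) (c : S → ℝ) (s : S) :
    Summable (fun t : ℕ => M.disc ^ t * ((Pmat M π ^ t).mulVec c) s) := by
  classical
  obtain ⟨R, hR⟩ : ∃ R : ℝ, ∀ s', |c s'| ≤ R := by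
    refine ⟨∑ s', |c s'|, fun s' => ?_⟩
    exact Finset.single_le_sum (fun u _ => abs_nonneg (c u)) (Finset.mem_univ s')
  refine Summable.of_norm_bounded (g := fun t => M.disc ^ t * R) ?_ ?_
  · exact (summable_geometric_of_lt_one M.disc_nonneg M.disc_lt_one).mul_right R
  · intro t
    rw [Real.norm_eq_abs, abs_mul, abs_of_nonneg (pow_nonneg M.disc_nonneg t)]
    exact mul_le_mul_of_nonneg_left (((RS_Pmat M hπ).pow t).mulVec_abs_le hR s)
      (pow_nonneg M.disc_nonneg t)

/-- Bellman recursion for soft policy values. -/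
lemma VpiSoft_bellman (M : MDP S A) (lam : ℝ) {π : S → A → ℝ} (hπ : IsPolicy π)
    (r : S × A → ℝ) (s : S) :
    VpiSoft M lam π r s
      = cpi lam π r s + M.disc * ∑ s', Pmat M π s s' * VpiSoft M lam π r s' := by
  classical
  set c := cpi lam π r with hc
  have hsum : ∀ u : S, Summable (fun t : ℕ => M.disc ^ t * ((Pmat M π ^ t).mulVec c) u) :=
    fun u => summable_series M hπ c u
  rw [VpiSoft_def, Summable.tsum_eq_zero_add (hsum s)]
  congr 1
  · simp [Matrix.one_mulVec]
  have hterm : ∀ t : ℕ,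
      M.disc ^ (t + 1) * ((Pmat M π ^ (t + 1)).mulVec c) s
        = ∑ s', Pmat M π s s' * (M.disc * (M.disc ^ t * ((Pmat M π ^ t).mulVec c) s')) := by
    intro t
    rw [pow_succ' (Pmat M π) t, ← Matrix.mulVec_mulVec]
    show M.disc ^ (t+1) * ∑ s', Pmat M π s s' * ((Pmat M π ^ t).mulVec c) s' = _
    rw [Finset.mul_sum]
    refine Finset.sum_congr rfl fun s' _ => by ring
  calc (∑' t : ℕ, M.disc ^ (t + 1) * ((Pmat M π ^ (t + 1)).mulVec c) s)
      = ∑' t : ℕ, ∑ s', Pmat M π s s' * (M.disc * (M.disc ^ t * ((Pmat M π ^ t).mulVec c) s')) := by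
        exact tsum_congr hterm
    _ = ∑ s', ∑' t : ℕ, Pmat M π s s' * (M.disc * (M.disc ^ t * ((Pmat M π ^ t).mulVec c) s')) := by
        refine Summable.tsum_finsetSum fun s' _ => ?_
        exact (((hsum s').mul_left M.disc).mul_left _)
    _ = M.disc * ∑ s', Pmat M π s s' * VpiSoft M lam π r s' := by
        rw [Finset.mul_sum]
        refine Finset.sum_congr rfl fun s' _ => ?_
        rw [tsum_mul_left, tsum_mul_left, VpiSoft_def]
        ring

end S8
namespace S8

section Gibbs

variable {A : Type} [Fintype A] [Nonempty A]

/-- log-sum-exp -/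
noncomputable def lse (lam : ℝ) (q : A → ℝ) : ℝ := lam * Real.log (∑ a, Real.exp (q a / lam))

lemma sum_exp_pos (q : A → ℝ) (lam : ℝ) : 0 < ∑ a, Real.exp (q a / lam) :=
  Finset.sum_pos (fun a _ => Real.exp_pos _) Finset.univ_nonempty

lemma lse_le_of_le {lam : ℝ} (hlam : 0 < lam) {q q' : A → ℝ} (h : ∀ a, q a ≤ q' a) :
    lse lam q ≤ lse lam q' := by
  unfold lse
  refine mul_le_mul_of_nonneg_left ?_ hlam.le
  refine Real.log_le_log (sum_exp_pos q lam) (Finset.sum_le_sum fun a _ => ?_)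
  exact Real.exp_le_exp.2 (by gcongr; exact h a)

lemma lse_add_const {lam : ℝ} (hlam : 0 < lam) (q : A → ℝ) (c : ℝ) :
    lse lam (fun a => q a + c) = lse lam q + c := by
  unfold lse
  have : ∀ a : A, Real.exp ((q a + c) / lam) = Real.exp (q a / lam) * Real.exp (c / lam) := by
    intro a
    rw [← Real.exp_add, add_div]
  rw [Finset.sum_congr rfl fun a _ => this a, ← Finset.sum_mul,
    Real.log_mul (sum_exp_pos q lam).ne' (Real.exp_pos _).ne', Real.log_exp, mul_add,
    mul_div_cancel₀ _ hlam.ne']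

/-- Gibbs' inequality: the entropy-regularized value of any distribution is at most `lse`. -/
lemma gibbs_le {lam : ℝ} (hlam : 0 < lam) {w : A → ℝ} (hw : ∀ a, 0 ≤ w a)
    (hw1 : ∑ a, w a = 1) (q : A → ℝ) :
    ∑ a, w a * (q a - lam * Real.log (w a)) ≤ lse lam q := by
  classical
  set T : Finset A := Finset.univ.filter (fun a => w a ≠ 0) with hT
  have hTpos : ∀ a ∈ T, 0 < w a := by
    intro a ha
    rcases (hw a).lt_or_eq with h | h
    · exact h
    · exact absurd h.symm (Finset.mem_filter.mp ha).2
  have hTsum : ∑ a ∈ T, w a = 1 := by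
    rw [hT, Finset.sum_filter_ne_zero, hw1]
  have hTne : T.Nonempty := by
    by_contra h
    rw [Finset.not_nonempty_iff_eq_empty] at h
    rw [h, Finset.sum_empty] at hTsum
    exact one_ne_zero hTsum.symm
  have hLHS : ∑ a, w a * (q a - lam * Real.log (w a))
      = ∑ a ∈ T, w a * (q a - lam * Real.log (w a)) := by
    rw [hT, Finset.sum_filter_of_ne]
    intro a _ h
    intro hwa
    exact h (by rw [hwa, zero_mul])
  rw [hLHS]
  -- rewrite each term as lam * (w a * log (exp (q a / lam) / w a))
  have hterm : ∀ a ∈ T, w a * (q a - lam * Real.log (w a))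
      = lam * (w a * Real.log (Real.exp (q a / lam) / w a)) := by
    intro a ha
    rw [Real.log_div (Real.exp_pos _).ne' (hTpos a ha).ne', Real.log_exp]
    field_simp
    try ring
  rw [Finset.sum_congr rfl hterm, ← Finset.mul_sum]
  have hjensen : ∑ a ∈ T, w a * Real.log (Real.exp (q a / lam) / w a)
      ≤ Real.log (∑ a ∈ T, w a * (Real.exp (q a / lam) / w a)) := by
    have := (strictConcaveOn_log_Ioi.concaveOn).le_map_sum
      (t := T) (w := w) (p := fun a => Real.exp (q a / lam) / w a)
      (fun a ha => (hTpos a ha).le) hTsum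
      (fun a ha => Set.mem_Ioi.2 (div_pos (Real.exp_pos _) (hTpos a ha)))
    simpa [smul_eq_mul] using this
  have hsum_eq : ∑ a ∈ T, w a * (Real.exp (q a / lam) / w a) = ∑ a ∈ T, Real.exp (q a / lam) := by
    refine Finset.sum_congr rfl fun a ha => ?_
    field_simp
    rw [div_self (hTpos a ha).ne']
  have hsub : ∑ a ∈ T, Real.exp (q a / lam) ≤ ∑ a, Real.exp (q a / lam) := by
    refine Finset.sum_le_sum_of_subset_of_nonneg (Finset.subset_univ T) ?_
    intro a _ _
    exact (Real.exp_pos _).le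
  have hTspos : 0 < ∑ a ∈ T, Real.exp (q a / lam) := by
    obtain ⟨a, ha⟩ := hTne
    exact Finset.sum_pos (fun b _ => Real.exp_pos _) ⟨a, ha⟩
  unfold lse
  refine mul_le_mul_of_nonneg_left ?_ hlam.le
  calc ∑ a ∈ T, w a * Real.log (Real.exp (q a / lam) / w a)
      ≤ Real.log (∑ a ∈ T, w a * (Real.exp (q a / lam) / w a)) := hjensen
    _ = Real.log (∑ a ∈ T, Real.exp (q a / lam)) := by rw [hsum_eq]
    _ ≤ Real.log (∑ a, Real.exp (q a / lam)) := Real.log_le_log hTspos hsub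

/-- Gibbs' equality for the softmax distribution. -/
lemma gibbs_eq {lam : ℝ} (hlam : 0 < lam) (q : A → ℝ) :
    ∑ a, (Real.exp (q a / lam) / ∑ a', Real.exp (q a' / lam)) *
      (q a - lam * Real.log (Real.exp (q a / lam) / ∑ a', Real.exp (q a' / lam))) = lse lam q := by
  have hZ : 0 < ∑ a', Real.exp (q a' / lam) := sum_exp_pos q lam
  have hterm : ∀ a : A, (Real.exp (q a / lam) / ∑ a', Real.exp (q a' / lam)) *
      (q a - lam * Real.log (Real.exp (q a / lam) / ∑ a', Real.exp (q a' / lam)))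
      = (Real.exp (q a / lam) / ∑ a', Real.exp (q a' / lam)) * lse lam q := by
    intro a
    rw [Real.log_div (Real.exp_pos _).ne' hZ.ne', Real.log_exp]
    unfold lse
    congr 1
    field_simp
    try ring
  rw [Finset.sum_congr rfl fun a _ => hterm a, ← Finset.sum_mul, ← Finset.sum_div,
    div_self hZ.ne', one_mul]

lemma softmax_sum_one {lam : ℝ} (q : A → ℝ) :
    ∑ a, Real.exp (q a / lam) / (∑ a', Real.exp (q a' / lam)) = 1 := by
  rw [← Finset.sum_div, div_self (sum_exp_pos q lam).ne']

end Gibbs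

end S8
namespace S8

set_option linter.unusedSectionVars false

variable {S A : Type} [Fintype S] [Fintype A] [DecidableEq S] [DecidableEq A] [Nonempty A]

/-- The soft Bellman optimality operator. -/
noncomputable def Top (M : MDP S A) (lam : ℝ) (r : S × A → ℝ) (v : S → ℝ) : S → ℝ :=
  fun s => lse lam (fun a => r (s, a) + M.disc * ∑ s', M.p s a s' * v s')

lemma Top_contracting (M : MDP S A) {lam : ℝ} (hlam : 0 < lam) (r : S × A → ℝ) :
    ContractingWith M.disc.toNNReal (Top M lam r) := by
  have hγ : (M.disc.toNNReal : ℝ) = M.disc := Real.coe_toNNReal _ M.disc_nonneg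
  constructor
  · rw [← Real.toNNReal_one]
    exact (Real.toNNReal_lt_toNNReal_iff one_pos).2 M.disc_lt_one
  · refine LipschitzWith.of_dist_le_mul fun v w => ?_
    have hd : (0:ℝ) ≤ M.disc * dist v w := mul_nonneg M.disc_nonneg dist_nonneg
    rw [hγ]
    refine (dist_pi_le_iff hd).2 fun s => ?_
    have key : ∀ v w : S → ℝ, Top M lam r v s ≤ Top M lam r w s + M.disc * dist v w := by
      intro v w
      have h1 : ∀ a, r (s, a) + M.disc * ∑ s', M.p s a s' * v s'
          ≤ (r (s, a) + M.disc * ∑ s', M.p s a s' * w s') + M.disc * dist v w := by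
        intro a
        have h2 : ∑ s', M.p s a s' * v s' ≤ (∑ s', M.p s a s' * w s') + dist v w := by
          have h3 : ∀ s', M.p s a s' * v s' ≤ M.p s a s' * (w s' + dist v w) := by
            intro s'
            refine mul_le_mul_of_nonneg_left ?_ (M.p_nonneg s a s')
            have := dist_le_pi_dist v w s'
            rw [Real.dist_eq] at this
            have := abs_le.1 this
            linarith [this.2]
          calc ∑ s', M.p s a s' * v s' ≤ ∑ s', M.p s a s' * (w s' + dist v w) :=
                Finset.sum_le_sum fun s' _ => h3 s'
            _ = (∑ s', M.p s a s' * w s') + dist v w := by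
                rw [Finset.sum_congr rfl fun s' _ => mul_add (M.p s a s') (w s') (dist v w),
                  Finset.sum_add_distrib, ← Finset.sum_mul, M.p_sum_one, one_mul]
        nlinarith [M.disc_nonneg]
      calc Top M lam r v s = lse lam (fun a => r (s, a) + M.disc * ∑ s', M.p s a s' * v s') := rfl
        _ ≤ lse lam (fun a => (r (s, a) + M.disc * ∑ s', M.p s a s' * w s') + M.disc * dist v w) :=
            lse_le_of_le hlam h1
        _ = Top M lam r w s + M.disc * dist v w := lse_add_const hlam _ _
    rw [Real.dist_eq, abs_sub_le_iff]
    constructor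
    · linarith [key v w]
    · have h5 := key w v
      rw [dist_comm w v] at h5
      linarith

/-- The fixed point of the soft Bellman operator. -/
noncomputable def vfix (M : MDP S A) {lam : ℝ} (hlam : 0 < lam) (r : S × A → ℝ) : S → ℝ :=
  haveI : Nonempty S := ⟨M.s0⟩
  ContractingWith.fixedPoint (Top M lam r) (Top_contracting M hlam r)

lemma vfix_fixed (M : MDP S A) {lam : ℝ} (hlam : 0 < lam) (r : S × A → ℝ) :
    Top M lam r (vfix M hlam r) = vfix M hlam r := by
  haveI : Nonempty S := ⟨M.s0⟩
  exact (Top_contracting M hlam r).fixedPoint_isFixedPt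

lemma vfix_unique (M : MDP S A) {lam : ℝ} (hlam : 0 < lam) (r : S × A → ℝ) {v : S → ℝ}
    (hv : Top M lam r v = v) : v = vfix M hlam r := by
  haveI : Nonempty S := ⟨M.s0⟩
  exact (Top_contracting M hlam r).fixedPoint_unique hv

/-- expanding a policy-weighted soft value against the Q-function of `v`. -/
lemma policy_expand (M : MDP S A) (lam : ℝ) {pol : S → A → ℝ} (hpol : IsPolicy pol)
    (r : S × A → ℝ) (v : S → ℝ) (s : S) :
    ∑ a, pol s a * ((r (s, a) + M.disc * ∑ s', M.p s a s' * v s') - lam * Real.log (pol s a))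
      = cpi lam pol r s + M.disc * ∑ s', Pmat M pol s s' * v s' := by
  have h1 : ∀ a, pol s a * ((r (s, a) + M.disc * ∑ s', M.p s a s' * v s')
        - lam * Real.log (pol s a))
      = pol s a * (r (s, a) - lam * Real.log (pol s a))
        + M.disc * ∑ s', pol s a * (M.p s a s' * v s') := by
    intro a
    have h2 : ∑ s', pol s a * (M.p s a s' * v s') = pol s a * ∑ s', M.p s a s' * v s' := by
      rw [Finset.mul_sum]
    rw [h2]
    ring
  rw [Finset.sum_congr rfl fun a _ => h1 a, Finset.sum_add_distrib]
  congr 1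
  rw [← Finset.mul_sum, Finset.sum_comm]
  congr 1
  refine Finset.sum_congr rfl fun s' _ => ?_
  show ∑ a, pol s a * (M.p s a s' * v s') = (∑ a, pol s a * M.p s a s') * v s'
  rw [Finset.sum_mul]
  exact Finset.sum_congr rfl fun a _ => by ring

lemma VpiSoft_le_vfix (M : MDP S A) {lam : ℝ} (hlam : 0 < lam) {pol : S → A → ℝ}
    (hpol : IsPolicy pol) (r : S × A → ℝ) (s : S) :
    VpiSoft M lam pol r s ≤ vfix M hlam r s := by
  haveI : Nonempty S := ⟨M.s0⟩
  set v := vfix M hlam r with hv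
  set D : S → ℝ := fun u => v u - VpiSoft M lam pol r u with hD
  have hkey : ∀ u, M.disc * ∑ s', Pmat M pol u s' * D s' ≤ D u := by
    intro u
    have hfix : v u = lse lam (fun a => r (u, a) + M.disc * ∑ s', M.p u a s' * v s') :=
      congrFun (vfix_fixed M hlam r).symm u
    have hgibbs : ∑ a, pol u a * ((r (u, a) + M.disc * ∑ s', M.p u a s' * v s')
          - lam * Real.log (pol u a))
        ≤ lse lam (fun a => r (u, a) + M.disc * ∑ s', M.p u a s' * v s') := by
      have := gibbs_le hlam (fun a => hpol.1 u a) (hpol.2 u)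
        (fun a => r (u, a) + M.disc * ∑ s', M.p u a s' * v s')
      convert this using 2
    have hexp := policy_expand M lam hpol r v u
    have hVb := VpiSoft_bellman M lam hpol r u
    have hDsum : ∑ s', Pmat M pol u s' * D s'
        = (∑ s', Pmat M pol u s' * v s') - ∑ s', Pmat M pol u s' * VpiSoft M lam pol r s' := by
      rw [← Finset.sum_sub_distrib]
      exact Finset.sum_congr rfl fun s' _ => by rw [hD]; ring
    rw [hDsum]
    have : cpi lam pol r u + M.disc * ∑ s', Pmat M pol u s' * v s' ≤ v u := by
      rw [hfix, ← hexp]; exact hgibbs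
    simp only [hD]
    rw [hVb]
    ring_nf
    ring_nf at this
    linarith
  obtain ⟨u0, _, hmin⟩ := Finset.exists_min_image Finset.univ D Finset.univ_nonempty
  have hmin' : ∀ u, D u0 ≤ D u := fun u => hmin u (Finset.mem_univ u)
  have hPmat := RS_Pmat M hpol
  have h1 : D u0 * 1 ≤ ∑ s', Pmat M pol u0 s' * D s' := by
    rw [← hPmat.2 u0, Finset.mul_sum]
    refine Finset.sum_le_sum fun s' _ => ?_
    rw [mul_comm (D u0)]
    exact mul_le_mul_of_nonneg_left (hmin' s') (hPmat.1 u0 s')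
  have h2 := hkey u0
  have h3 : M.disc * (D u0) ≤ D u0 := by
    nlinarith [M.disc_nonneg]
  have h4 : 0 ≤ D u0 := by nlinarith [M.disc_lt_one]
  have := hmin' s
  simp only [hD] at this h4 ⊢
  linarith

/-- The softmax policy w.r.t. the fixed point. -/
noncomputable def softmaxPol (M : MDP S A) {lam : ℝ} (hlam : 0 < lam) (r : S × A → ℝ) :
    S → A → ℝ :=
  fun s a => Real.exp ((r (s, a) + M.disc * ∑ s', M.p s a s' * vfix M hlam r s') / lam) /
    ∑ a', Real.exp ((r (s, a') + M.disc * ∑ s', M.p s a' s' * vfix M hlam r s') / lam)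

lemma softmaxPol_isPolicy (M : MDP S A) {lam : ℝ} (hlam : 0 < lam) (r : S × A → ℝ) :
    IsPolicy (softmaxPol M hlam r) := by
  constructor
  · intro s a
    exact div_nonneg (Real.exp_pos _).le (sum_exp_pos _ lam).le
  · intro s
    exact softmax_sum_one _

lemma VpiSoft_softmax_eq (M : MDP S A) {lam : ℝ} (hlam : 0 < lam) (r : S × A → ℝ) (s : S) :
    VpiSoft M lam (softmaxPol M hlam r) r s = vfix M hlam r s := by
  haveI : Nonempty S := ⟨M.s0⟩
  set pol := softmaxPol M hlam r with hpoldef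
  have hpol : IsPolicy pol := softmaxPol_isPolicy M hlam r
  set v := vfix M hlam r with hv
  set D : S → ℝ := fun u => v u - VpiSoft M lam pol r u with hD
  have hkey : ∀ u, D u = M.disc * ∑ s', Pmat M pol u s' * D s' := by
    intro u
    have hfix : v u = lse lam (fun a => r (u, a) + M.disc * ∑ s', M.p u a s' * v s') :=
      congrFun (vfix_fixed M hlam r).symm u
    have hgibbs : ∑ a, pol u a * ((r (u, a) + M.disc * ∑ s', M.p u a s' * v s')
          - lam * Real.log (pol u a))
        = lse lam (fun a => r (u, a) + M.disc * ∑ s', M.p u a s' * v s') :=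
      gibbs_eq hlam (fun a => r (u, a) + M.disc * ∑ s', M.p u a s' * v s')
    have hexp := policy_expand M lam hpol r v u
    have hVb := VpiSoft_bellman M lam hpol r u
    have hveq : cpi lam pol r u + M.disc * ∑ s', Pmat M pol u s' * v s' = v u := by
      rw [hfix, ← hexp]; exact hgibbs
    have hDsum : ∑ s', Pmat M pol u s' * D s'
        = (∑ s', Pmat M pol u s' * v s') - ∑ s', Pmat M pol u s' * VpiSoft M lam pol r s' := by
      rw [← Finset.sum_sub_distrib]
      exact Finset.sum_congr rfl fun s' _ => by rw [hD]; ring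
    rw [hDsum]
    simp only [hD]
    rw [hVb]
    ring_nf
    ring_nf at hveq
    linarith
  have hPmat := RS_Pmat M hpol
  -- min and max arguments
  have hge : ∀ u, 0 ≤ D u := by
    obtain ⟨u0, _, hmin⟩ := Finset.exists_min_image Finset.univ D Finset.univ_nonempty
    have hmin' : ∀ u, D u0 ≤ D u := fun u => hmin u (Finset.mem_univ u)
    have h1 : D u0 * 1 ≤ ∑ s', Pmat M pol u0 s' * D s' := by
      rw [← hPmat.2 u0, Finset.mul_sum]
      refine Finset.sum_le_sum fun s' _ => ?_
      rw [mul_comm (D u0)]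
      exact mul_le_mul_of_nonneg_left (hmin' s') (hPmat.1 u0 s')
    have h2 := hkey u0
    have h4 : 0 ≤ D u0 := by nlinarith [M.disc_lt_one, M.disc_nonneg]
    intro u
    linarith [hmin' u]
  have hle : ∀ u, D u ≤ 0 := by
    obtain ⟨u0, _, hmax⟩ := Finset.exists_max_image Finset.univ D Finset.univ_nonempty
    have hmax' : ∀ u, D u ≤ D u0 := fun u => hmax u (Finset.mem_univ u)
    have h1 : ∑ s', Pmat M pol u0 s' * D s' ≤ D u0 * 1 := by
      rw [← hPmat.2 u0, Finset.mul_sum]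
      refine Finset.sum_le_sum fun s' _ => ?_
      rw [mul_comm (D u0)]
      exact mul_le_mul_of_nonneg_left (hmax' s') (hPmat.1 u0 s')
    have h2 := hkey u0
    have h4 : D u0 ≤ 0 := by nlinarith [M.disc_lt_one, M.disc_nonneg]
    intro u
    linarith [hmax' u]
  have h0 : D s = 0 := le_antisymm (hle s) (hge s)
  simp only [hD] at h0
  linarith

lemma VstarSoft_eq_vfix (M : MDP S A) {lam : ℝ} (hlam : 0 < lam) (r : S × A → ℝ) (s : S) :
    VstarSoft M lam r s = vfix M hlam r s := by
  haveI : Nonempty {π : S → A → ℝ // IsPolicy π} :=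
    ⟨⟨softmaxPol M hlam r, softmaxPol_isPolicy M hlam r⟩⟩
  have hbdd : ∀ p : {π : S → A → ℝ // IsPolicy π}, VpiSoft M lam p.1 r s ≤ vfix M hlam r s :=
    fun p => VpiSoft_le_vfix M hlam p.2 r s
  refine le_antisymm (ciSup_le hbdd) ?_
  have hmem : BddAbove (Set.range fun p : {π : S → A → ℝ // IsPolicy π} =>
      VpiSoft M lam p.1 r s) := by
    refine ⟨vfix M hlam r s, ?_⟩
    rintro x ⟨p, rfl⟩
    exact hbdd p
  have := le_ciSup hmem (⟨softmaxPol M hlam r, softmaxPol_isPolicy M hlam r⟩ :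
    {π : S → A → ℝ // IsPolicy π})
  rwa [VpiSoft_softmax_eq M hlam r s] at this

/-- The soft Bellman optimality identity for `VstarSoft`. -/
lemma VstarSoft_bellman (M : MDP S A) {lam : ℝ} (hlam : 0 < lam) (r : S × A → ℝ) (s : S) :
    VstarSoft M lam r s = lse lam (fun a => QstarSoft M lam r s a) := by
  have hQ : ∀ a, QstarSoft M lam r s a
      = r (s, a) + M.disc * ∑ s', M.p s a s' * vfix M hlam r s' := by
    intro a
    unfold QstarSoft
    congr 1
    congr 1
    exact Finset.sum_congr rfl fun s' _ => by rw [VstarSoft_eq_vfix M hlam r s']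
  rw [VstarSoft_eq_vfix M hlam r s]
  have := congrFun (vfix_fixed M hlam r) s
  rw [← this]
  unfold Top
  congr 1
  funext a
  exact (hQ a).symm

end S8
namespace S8

set_option linter.unusedSectionVars false

variable {S A : Type} [Fintype S] [Fintype A] [DecidableEq S] [DecidableEq A]

lemma nonemptyA {πE : S → A → ℝ} (hπE : IsPolicy πE) (s : S) : Nonempty A := by
  by_contra h
  rw [not_nonempty_iff] at h
  have := hπE.2 s
  rw [Finset.univ_eq_empty, Finset.sum_empty] at this
  norm_num at this

lemma exp_lam_log {lam x : ℝ} (hlam : 0 < lam) (hx : 0 < x) :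
    Real.exp (lam * Real.log x / lam) = x := by
  rw [mul_comm lam (Real.log x), mul_div_assoc, div_self hlam.ne', mul_one, Real.exp_log hx]

/-- the affine parametrization of the feasible set -/
noncomputable def fmap (M : MDP S A) (lam : ℝ) (πE : S → A → ℝ) (v : S → ℝ) : S × A → ℝ :=
  fun sa => lam * Real.log (πE sa.1 sa.2) + v sa.1 - M.disc * ∑ s', M.p sa.1 sa.2 s' * v s'

/-- the cube `[-C1, C1]^S` -/
def Kcube (S : Type) [Fintype S] (C1 : ℝ) : Set (S → ℝ) := {v | ∀ s, |v s| ≤ C1}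

section Char

variable {lam C1 C2 πmin : ℝ} {M : MDP S A} {πE : S → A → ℝ}

lemma log_pE_bound (hlam : 0 < lam) (hπE : IsPolicy πE) (hπmin : 0 < πmin)
    (hlb : ∀ s a, πmin ≤ πE s a) (hC2' : lam * Real.log (1 / πmin) ≤ C2) (s : S) (a : A) :
    |lam * Real.log (πE s a)| ≤ C2 := by
  have hpos : 0 < πE s a := lt_of_lt_of_le hπmin (hlb s a)
  have h1 : Real.log (πE s a) ≤ 0 := Real.log_nonpos hpos.le (pE_le_one hπE s a)
  have h2 : Real.log πmin ≤ Real.log (πE s a) := Real.log_le_log hπmin (hlb s a)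
  have h3 : |Real.log (πE s a)| ≤ Real.log (1 / πmin) := by
    rw [abs_of_nonpos h1, one_div, Real.log_inv]
    linarith
  calc |lam * Real.log (πE s a)| = lam * |Real.log (πE s a)| := by
        rw [abs_mul, abs_of_pos hlam]
    _ ≤ lam * Real.log (1 / πmin) := mul_le_mul_of_nonneg_left h3 hlam.le
    _ ≤ C2 := hC2'

lemma Top_fmap (hlam : 0 < lam) (hπE : IsPolicy πE) (hπmin : 0 < πmin)
    (hlb : ∀ s a, πmin ≤ πE s a) (v : S → ℝ) :
    Top M lam (fmap M lam πE v) v = v := by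
  haveI : Nonempty A := nonemptyA hπE M.s0
  funext s
  have h1 : (fun a => fmap M lam πE v (s, a) + M.disc * ∑ s', M.p s a s' * v s')
      = fun a => lam * Real.log (πE s a) + v s := by
    funext a
    unfold fmap
    ring
  show lse lam (fun a => fmap M lam πE v (s, a) + M.disc * ∑ s', M.p s a s' * v s') = v s
  rw [h1]
  have h2 : lse lam (fun a => lam * Real.log (πE s a) + v s)
      = lse lam (fun a => lam * Real.log (πE s a)) + v s := lse_add_const hlam _ _
  rw [h2]
  have h3 : ∀ a : A, Real.exp (lam * Real.log (πE s a) / lam) = πE s a := fun a =>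
    exp_lam_log hlam (lt_of_lt_of_le hπmin (hlb s a))
  unfold lse
  rw [Finset.sum_congr rfl fun a _ => h3 a, hπE.2 s, Real.log_one, mul_zero, zero_add]

lemma vfix_fmap [Nonempty A] (hlam : 0 < lam) (hπE : IsPolicy πE) (hπmin : 0 < πmin)
    (hlb : ∀ s a, πmin ≤ πE s a) (v : S → ℝ) :
    vfix M hlam (fmap M lam πE v) = v := by
  exact (vfix_unique M hlam _ (Top_fmap hlam hπE hπmin hlb v)).symm

lemma VstarSoft_fmap (hlam : 0 < lam) (hπE : IsPolicy πE) (hπmin : 0 < πmin)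
    (hlb : ∀ s a, πmin ≤ πE s a) (v : S → ℝ) (s : S) :
    VstarSoft M lam (fmap M lam πE v) s = v s := by
  haveI : Nonempty A := nonemptyA hπE M.s0
  rw [VstarSoft_eq_vfix M hlam, vfix_fmap hlam hπE hπmin hlb]

lemma QstarSoft_fmap (hlam : 0 < lam) (hπE : IsPolicy πE) (hπmin : 0 < πmin)
    (hlb : ∀ s a, πmin ≤ πE s a) (v : S → ℝ) (s : S) (a : A) :
    QstarSoft M lam (fmap M lam πE v) s a = lam * Real.log (πE s a) + v s := by
  unfold QstarSoft
  have h1 : ∑ s', M.p s a s' * VstarSoft M lam (fmap M lam πE v) s'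
      = ∑ s', M.p s a s' * v s' :=
    Finset.sum_congr rfl fun s' _ => by rw [VstarSoft_fmap hlam hπE hπmin hlb]
  rw [h1]
  unfold fmap
  ring

lemma mem_RMCE_fmap (hlam : 0 < lam) (hπE : IsPolicy πE) (hπmin : 0 < πmin)
    (hlb : ∀ s a, πmin ≤ πE s a) (v : S → ℝ) :
    fmap M lam πE v ∈ RMCE M lam πE := by
  intro s a
  have hexp : ∀ a' : A, Real.exp (QstarSoft M lam (fmap M lam πE v) s a' / lam)
      = πE s a' * Real.exp (v s / lam) := by
    intro a'
    rw [QstarSoft_fmap hlam hπE hπmin hlb, add_div, Real.exp_add,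
      exp_lam_log hlam (lt_of_lt_of_le hπmin (hlb s a'))]
  rw [hexp a, Finset.sum_congr rfl fun a' _ => hexp a', ← Finset.sum_mul, hπE.2 s, one_mul,
    mul_div_assoc, div_self (Real.exp_pos _).ne', mul_one]

lemma mem_SRMCE_fmap (hlam : 0 < lam) (hπE : IsPolicy πE) (hπmin : 0 < πmin)
    (hlb : ∀ s a, πmin ≤ πE s a) (hC2' : lam * Real.log (1 / πmin) ≤ C2)
    {v : S → ℝ} (hv : v ∈ Kcube S C1) :
    fmap M lam πE v ∈ SRMCE M lam C1 C2 := by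
  intro s a
  constructor
  · rw [VstarSoft_fmap hlam hπE hπmin hlb]
    exact hv s
  · unfold AstarSoft
    rw [QstarSoft_fmap hlam hπE hπmin hlb, VstarSoft_fmap hlam hπE hπmin hlb, add_sub_cancel_right]
    exact log_pE_bound hlam hπE hπmin hlb hC2' s a

/-- Characterization of the feasible set as the affine image of a cube. -/
lemma set_char (hlam : 0 < lam) (hπE : IsPolicy πE) (hπmin : 0 < πmin)
    (hlb : ∀ s a, πmin ≤ πE s a) (hC2' : lam * Real.log (1 / πmin) ≤ C2) (hC1 : 0 < C1) :
    SRMCE M lam C1 C2 ∩ RMCE M lam πE = fmap M lam πE '' Kcube S C1 := by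
  haveI : Nonempty A := nonemptyA hπE M.s0
  ext r
  constructor
  · rintro ⟨hS, hR⟩
    refine ⟨fun s => VstarSoft M lam r s, fun s => (hS s (Classical.arbitrary A)).1, ?_⟩
    funext sa
    obtain ⟨s, a⟩ := sa
    have hbell := VstarSoft_bellman M hlam r s
    have hZ : (0:ℝ) < ∑ a', Real.exp (QstarSoft M lam r s a' / lam) :=
      sum_exp_pos _ lam
    have hlog : Real.log (πE s a)
        = QstarSoft M lam r s a / lam - Real.log (∑ a', Real.exp (QstarSoft M lam r s a' / lam)) := by
      rw [hR s a, Real.log_div (Real.exp_pos _).ne' hZ.ne', Real.log_exp]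
    have hQ : lam * Real.log (πE s a) = QstarSoft M lam r s a - VstarSoft M lam r s := by
      rw [hlog, hbell]
      unfold lse
      field_simp
    show lam * Real.log (πE s a) + VstarSoft M lam r s
        - M.disc * ∑ s', M.p s a s' * VstarSoft M lam r s' = r (s, a)
    rw [hQ]
    unfold QstarSoft
    ring
  · rintro ⟨v, hv, rfl⟩
    exact ⟨mem_SRMCE_fmap hlam hπE hπmin hlb hC2' hv, mem_RMCE_fmap hlam hπE hπmin hlb v⟩

end Char

end S8
namespace S8

set_option linter.unusedSectionVars false
set_option maxHeartbeats 1000000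

open MeasureTheory

variable {S A : Type} [Fintype S] [Fintype A] [DecidableEq S] [DecidableEq A]

/-- the linear part of the affine parametrization, into Euclidean space -/
noncomputable def Lmap (M : MDP S A) : (S → ℝ) →ₗ[ℝ] EuclideanSpace ℝ (S × A) where
  toFun v := WithLp.toLp 2 (fun sa : S × A => v sa.1 - M.disc * ∑ s', M.p sa.1 sa.2 s' * v s')
  map_add' v w := by
    refine PiLp.ext fun sa => ?_
    show (v sa.1 + w sa.1) - M.disc * ∑ s', M.p sa.1 sa.2 s' * (v s' + w s')
      = (v sa.1 - M.disc * ∑ s', M.p sa.1 sa.2 s' * v s')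
        + (w sa.1 - M.disc * ∑ s', M.p sa.1 sa.2 s' * w s')
    rw [Finset.sum_congr rfl fun s' _ => mul_add (M.p sa.1 sa.2 s') (v s') (w s'),
      Finset.sum_add_distrib]
    ring
  map_smul' t v := by
    refine PiLp.ext fun sa => ?_
    show (t * v sa.1) - M.disc * ∑ s', M.p sa.1 sa.2 s' * (t * v s')
      = t * (v sa.1 - M.disc * ∑ s', M.p sa.1 sa.2 s' * v s')
    have h : (∑ s', M.p sa.1 sa.2 s' * (t * v s')) = t * ∑ s', M.p sa.1 sa.2 s' * v s' := by
      rw [Finset.mul_sum]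
      exact Finset.sum_congr rfl fun s' _ => by ring
    rw [h]
    ring

/-- the constant part of the affine parametrization -/
noncomputable def bvec (lam : ℝ) (πE : S → A → ℝ) : EuclideanSpace ℝ (S × A) :=
  WithLp.toLp 2 (fun sa : S × A => lam * Real.log (πE sa.1 sa.2))

/-- the affine parametrization, as a map into Euclidean space -/
noncomputable def f2 (M : MDP S A) (lam : ℝ) (πE : S → A → ℝ) (v : S → ℝ) :
    EuclideanSpace ℝ (S × A) :=
  bvec lam πE + Lmap M v

lemma f2_eq (M : MDP S A) (lam : ℝ) (πE : S → A → ℝ) (v : S → ℝ) :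
    f2 M lam πE v = fmap M lam πE v := by
  funext sa
  show bvec lam πE sa + Lmap M v sa = fmap M lam πE v sa
  show lam * Real.log (πE sa.1 sa.2) + (v sa.1 - M.disc * ∑ s', M.p sa.1 sa.2 s' * v s') = _
  unfold fmap
  ring

lemma Lmap_ker (M : MDP S A) [Nonempty A] : LinearMap.ker (Lmap M) = ⊥ := by
  haveI : Nonempty S := ⟨M.s0⟩
  rw [LinearMap.ker_eq_bot']
  intro v hv
  set a : A := Classical.arbitrary A
  have h0 : ∀ s : S, v s = M.disc * ∑ s', M.p s a s' * v s' := by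
    intro s
    have h := congrFun (congrArg WithLp.ofLp hv) (s, a)
    have h' : v s - M.disc * ∑ s', M.p s a s' * v s' = 0 := h
    linarith
  obtain ⟨s0, _, hmax⟩ := Finset.exists_max_image Finset.univ (fun s => |v s|)
    Finset.univ_nonempty
  have hmax' : ∀ s, |v s| ≤ |v s0| := fun s => hmax s (Finset.mem_univ s)
  have h1 : |v s0| ≤ M.disc * |v s0| := by
    calc |v s0| = M.disc * |∑ s', M.p s0 a s' * v s'| := by
          rw [h0 s0, abs_mul, abs_of_nonneg M.disc_nonneg]
      _ ≤ M.disc * |v s0| := by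
          refine mul_le_mul_of_nonneg_left ?_ M.disc_nonneg
          refine (Finset.abs_sum_le_sum_abs _ _).trans ?_
          calc ∑ s', |M.p s0 a s' * v s'| ≤ ∑ s', M.p s0 a s' * |v s0| := by
                refine Finset.sum_le_sum fun s' _ => ?_
                rw [abs_mul, abs_of_nonneg (M.p_nonneg s0 a s')]
                exact mul_le_mul_of_nonneg_left (hmax' s') (M.p_nonneg s0 a s')
            _ = |v s0| := by rw [← Finset.sum_mul, M.p_sum_one, one_mul]
  have h2 : |v s0| = 0 := by nlinarith [abs_nonneg (v s0), M.disc_lt_one]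
  funext s
  have : |v s| ≤ 0 := h2 ▸ hmax' s
  have : |v s| = 0 := le_antisymm this (abs_nonneg _)
  simpa using this

lemma lipschitz_of_linear {E F : Type*} [NormedAddCommGroup E] [NormedSpace ℝ E]
    [NormedAddCommGroup F] [NormedSpace ℝ F] [FiniteDimensional ℝ E] (f : E →ₗ[ℝ] F) :
    ∃ K : NNReal, LipschitzWith K f := by
  refine ⟨‖LinearMap.toContinuousLinearMap f‖₊, ?_⟩
  have h := (LinearMap.toContinuousLinearMap f).lipschitz
  rwa [LinearMap.coe_toContinuousLinearMap'] at h

/-- The centroid computation: the integral of each coordinate over the feasible set. -/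
lemma centroid (M : MDP S A) {lam C1 C2 πmin : ℝ} (πE : S → A → ℝ)
    (hlam : 0 < lam) (hC1 : 0 < C1)
    (hπE : IsPolicy πE) (hπmin : 0 < πmin) (hlb : ∀ s a, πmin ≤ πE s a)
    (hC2' : lam * Real.log (1 / πmin) ≤ C2) :
    ∃ m : ℝ, 0 < m ∧ ∀ s a,
      (∫ x in (show Set (EuclideanSpace ℝ (S × A)) from WithLp.ofLp ⁻¹' (SRMCE M lam C1 C2 ∩ RMCE M lam πE)),
        x (s, a) ∂(μH[(Fintype.card S : ℝ)])) = lam * Real.log (πE s a) * m := by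
  classical
  haveI : Nonempty A := nonemptyA hπE M.s0
  haveI : Nonempty S := ⟨M.s0⟩
  set d : ℝ := (Fintype.card S : ℝ) with hd
  have hd0 : (0:ℝ) ≤ d := Nat.cast_nonneg _
  set μ : Measure (EuclideanSpace ℝ (S × A)) := μH[d] with hμ
  set K : Set (S → ℝ) := Kcube S C1 with hK
  set E : Set (EuclideanSpace ℝ (S × A)) :=
    (show Set (EuclideanSpace ℝ (S × A)) from WithLp.ofLp ⁻¹' (SRMCE M lam C1 C2 ∩ RMCE M lam πE)) with hEdef
  have hchar : E = f2 M lam πE '' K := by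
    have h1 : SRMCE M lam C1 C2 ∩ RMCE M lam πE = fmap M lam πE '' K :=
      set_char hlam hπE hπmin hlb hC2' hC1
    calc E = WithLp.ofLp ⁻¹' (fmap M lam πE '' K) := by rw [← h1]
      _ = f2 M lam πE '' K := by
        ext x; constructor
        · rintro ⟨v, hv, hx⟩
          exact ⟨v, hv, WithLp.ofLp_injective 2 ((f2_eq M lam πE v).trans hx)⟩
        · rintro ⟨v, hv, rfl⟩
          exact ⟨v, hv, (f2_eq M lam πE v).symm⟩
  -- cube facts
  have hKpi : K = Set.pi Set.univ (fun _ : S => Set.Icc (-C1) C1) := by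
    ext v
    simp only [hK, Kcube, Set.mem_setOf_eq, Set.mem_pi, Set.mem_univ, Set.mem_Icc,
      forall_true_left, abs_le]
  have hKcomp : IsCompact K := by
    rw [hKpi]; exact isCompact_univ_pi fun _ => isCompact_Icc
  have hKvol : volume K = ∏ _s : S, ENNReal.ofReal (2 * C1) := by
    rw [hKpi, volume_pi_pi]
    refine Finset.prod_congr rfl fun s _ => ?_
    rw [Real.volume_Icc, show C1 - -C1 = 2 * C1 by ring]
  have hKvol_pos : 0 < volume K := by
    rw [hKvol]
    refine CanonicallyOrderedAdd.prod_pos.2 fun s _ => ?_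
    rw [ENNReal.ofReal_pos]
    linarith
  have hKvol_fin : volume K < ⊤ := by
    rw [hKvol]
    refine ENNReal.prod_lt_top fun s _ => ENNReal.ofReal_lt_top
  have hKH : μH[d] K = volume K := by
    rw [hd]
    rw [hausdorffMeasure_pi_real]
  -- Lipschitz data
  obtain ⟨G, hG⟩ := (Lmap M).exists_leftInverse_of_injective (Lmap_ker M)
  obtain ⟨KL, hKL⟩ := lipschitz_of_linear (Lmap M)
  obtain ⟨KG, hKG⟩ := lipschitz_of_linear G
  have hf2lip : LipschitzWith KL (f2 M lam πE) := by
    refine LipschitzWith.of_dist_le_mul fun x y => ?_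
    have h1 : dist (f2 M lam πE x) (f2 M lam πE y) = dist (Lmap M x) (Lmap M y) := by
      unfold f2
      rw [dist_add_left]
    rw [h1]
    exact hKL.dist_le_mul x y
  set hinv : EuclideanSpace ℝ (S × A) → (S → ℝ) := fun x => G x - G (bvec lam πE) with hhinv
  have hinvlip : LipschitzWith KG hinv := by
    refine LipschitzWith.of_dist_le_mul fun x y => ?_
    have h1 : dist (hinv x) (hinv y) = dist (G x) (G y) := by
      rw [hhinv]
      exact dist_sub_right (G x) (G y) (G (bvec lam πE))
    rw [h1]
    exact hKG.dist_le_mul x y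
  have hinv_f2 : ∀ v, hinv (f2 M lam πE v) = v := by
    intro v
    rw [hhinv]
    show G (bvec lam πE + Lmap M v) - G (bvec lam πE) = v
    rw [map_add]
    have h2 : G (Lmap M v) = v := by
      have h3 := LinearMap.congr_fun hG v
      simpa using h3
    rw [h2]
    abel
  have h_img : hinv '' E = K := by
    rw [hchar, Set.image_image]
    calc (fun v => hinv (f2 M lam πE v)) '' K = (fun v => v) '' K :=
          Set.image_congr fun v _ => hinv_f2 v
      _ = K := Set.image_id K
  -- measure bounds
  have hEfin : μ E < ⊤ := by
    rw [hchar, hμ]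
    calc μH[d] (f2 M lam πE '' K) ≤ (KL : ℝ≥0∞) ^ d * μH[d] K :=
          hf2lip.hausdorffMeasure_image_le hd0 K
      _ = (KL : ℝ≥0∞) ^ d * volume K := by rw [hKH]
      _ < ⊤ := ENNReal.mul_lt_top
          (ENNReal.rpow_lt_top_of_nonneg hd0 ENNReal.coe_ne_top) hKvol_fin
  have hEpos : 0 < μ E := by
    rcases (zero_le : 0 ≤ μ E).lt_or_eq with h | h
    · exact h
    exfalso
    have h1 : μH[d] K ≤ (KG : ℝ≥0∞) ^ d * μ E := by
      conv_lhs => rw [← h_img]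
      exact hinvlip.hausdorffMeasure_image_le hd0 E
    rw [← h, mul_zero] at h1
    rw [hKH] at h1
    exact absurd (le_antisymm h1 zero_le) hKvol_pos.ne'
  have hEmeas : MeasurableSet E := by
    rw [hchar]
    exact (hKcomp.image hf2lip.continuous).isClosed.measurableSet
  haveI hfinm : IsFiniteMeasure (μ.restrict E) := by
    constructor
    rw [Measure.restrict_apply_univ]
    exact hEfin
  refine ⟨(μ E).toReal, ENNReal.toReal_pos hEpos.ne' hEfin.ne, ?_⟩
  intro s a
  -- continuity of evaluation
  have hgcont : Continuous fun x : EuclideanSpace ℝ (S × A) => x (s, a) := by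
    have h : Continuous fun x : (S × A) → ℝ => x (s, a) := continuous_apply _
    exact h.comp (PiLp.continuous_ofLp ..)
  -- boundedness on E
  have hbound : ∀ x ∈ E, |x (s, a)| ≤ C2 + C1 + C1 := by
    intro x hx
    rw [hchar] at hx
    obtain ⟨v, hv, rfl⟩ := hx
    have hxv : f2 M lam πE v (s, a) = fmap M lam πE v (s, a) := congrFun (f2_eq M lam πE v) (s, a)
    rw [hxv]
    have h5 : |∑ s', M.p s a s' * v s'| ≤ C1 := by
      refine (Finset.abs_sum_le_sum_abs _ _).trans ?_
      calc ∑ s', |M.p s a s' * v s'| ≤ ∑ s', M.p s a s' * C1 := by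
            refine Finset.sum_le_sum fun s' _ => ?_
            rw [abs_mul, abs_of_nonneg (M.p_nonneg s a s')]
            exact mul_le_mul_of_nonneg_left (hv s') (M.p_nonneg s a s')
        _ = C1 := by rw [← Finset.sum_mul, M.p_sum_one, one_mul]
    have h6 : |lam * Real.log (πE s a)| ≤ C2 := log_pE_bound hlam hπE hπmin hlb hC2' s a
    have h7 : |M.disc * ∑ s', M.p s a s' * v s'| ≤ C1 := by
      rw [abs_mul, abs_of_nonneg M.disc_nonneg]
      calc M.disc * |∑ s', M.p s a s' * v s'|
          ≤ 1 * |∑ s', M.p s a s' * v s'| :=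
            mul_le_mul_of_nonneg_right M.disc_lt_one.le (abs_nonneg _)
        _ = |∑ s', M.p s a s' * v s'| := one_mul _
        _ ≤ C1 := h5
    have h8 := hv s
    unfold fmap
    have h9 := abs_add_le (lam * Real.log (πE s a)) (v s)
    have h10 := abs_sub (lam * Real.log (πE s a) + v s) (M.disc * ∑ s', M.p s a s' * v s')
    calc |lam * Real.log (πE s a) + v s - M.disc * ∑ s', M.p s a s' * v s'|
        ≤ |lam * Real.log (πE s a) + v s| + |M.disc * ∑ s', M.p s a s' * v s'| := by
          rw [sub_eq_add_neg]
          refine (abs_add_le _ _).trans ?_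
          rw [abs_neg]
      _ ≤ C2 + C1 + C1 := by
          have := abs_add_le (lam * Real.log (πE s a)) (v s)
          linarith
  -- integrability of the coordinate
  have hgi : Integrable (fun x : EuclideanSpace ℝ (S × A) => x (s, a)) (μ.restrict E) := by
    refine Integrable.mono' (integrable_const (C2 + C1 + C1)) hgcont.aestronglyMeasurable ?_
    rw [ae_restrict_iff' hEmeas]
    refine Filter.Eventually.of_forall fun x hx => ?_
    rw [Real.norm_eq_abs]
    exact hbound x hx
  -- the symmetry
  set c : EuclideanSpace ℝ (S × A) := bvec lam πE + bvec lam πE with hc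
  set σ : EuclideanSpace ℝ (S × A) ≃ᵢ EuclideanSpace ℝ (S × A) := IsometryEquiv.constVSub c
    with hσ
  have hσapp : ∀ x, σ x = c - x := fun x => rfl
  have hσf2 : ∀ v, σ (f2 M lam πE v) = f2 M lam πE (-v) := by
    intro v
    rw [hσapp]
    show c - (bvec lam πE + Lmap M v) = bvec lam πE + Lmap M (-v)
    rw [map_neg, hc]
    abel
  have hσE : σ '' E = E := by
    rw [hchar, Set.image_image]
    have h1 : (fun v => σ (f2 M lam πE v)) = fun v => f2 M lam πE (-v) := funext hσf2
    rw [h1]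
    have hnegK : (fun v : S → ℝ => -v) '' K = K := by
      ext v
      constructor
      · rintro ⟨w, hw, rfl⟩
        exact fun u => by simpa using hw u
      · intro hv
        exact ⟨-v, fun u => by simpa using hv u, by simp⟩
    rw [show (fun v => f2 M lam πE (-v)) = (f2 M lam πE) ∘ (fun v : S → ℝ => -v) from rfl,
      Set.image_comp, hnegK]
  have hpres : MeasurePreserving σ μ μ := by
    rw [hμ]
    exact σ.measurePreserving_hausdorffMeasure d
  have hpre : σ ⁻¹' E = E := by
    calc σ ⁻¹' E = σ ⁻¹' (σ '' E) := by rw [hσE]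
      _ = E := Set.preimage_image_eq E σ.injective
  have hpresE : MeasurePreserving σ (μ.restrict E) (μ.restrict E) := by
    have h1 := hpres.restrict_preimage hEmeas
    rwa [hpre] at h1
  have hcomp : ∫ x in E, ((σ x) (s, a) - bvec lam πE (s, a)) ∂μ
      = ∫ x in E, (x (s, a) - bvec lam πE (s, a)) ∂μ :=
    hpresE.integral_comp σ.toHomeomorph.measurableEmbedding
      (fun y => y (s, a) - bvec lam πE (s, a))
  have hneg : ∀ x : EuclideanSpace ℝ (S × A),
      (σ x) (s, a) - bvec lam πE (s, a) = -(x (s, a) - bvec lam πE (s, a)) := by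
    intro x
    rw [hσapp]
    have h1 : (c - x) (s, a) = c (s, a) - x (s, a) := rfl
    have h2 : c (s, a) = bvec lam πE (s, a) + bvec lam πE (s, a) := rfl
    rw [h1, h2]
    ring
  have hzero : ∫ x in E, (x (s, a) - bvec lam πE (s, a)) ∂μ = 0 := by
    have h1 : (fun x : EuclideanSpace ℝ (S × A) => (σ x) (s, a) - bvec lam πE (s, a))
        = fun x => -(x (s, a) - bvec lam πE (s, a)) := funext hneg
    have h2 := hcomp
    rw [h1, integral_neg] at h2
    linarith
  -- put it together
  have hsplit : (fun x : EuclideanSpace ℝ (S × A) => x (s, a))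
      = fun x => (x (s, a) - bvec lam πE (s, a)) + bvec lam πE (s, a) :=
    funext fun x => by ring
  have hconst : ∫ _x in E, bvec lam πE (s, a) ∂μ = (μ E).toReal * bvec lam πE (s, a) := by
    rw [setIntegral_const, smul_eq_mul]; rfl
  calc ∫ x in E, x (s, a) ∂μ
      = ∫ x in E, ((x (s, a) - bvec lam πE (s, a)) + bvec lam πE (s, a)) ∂μ := by rw [← hsplit]
    _ = (∫ x in E, (x (s, a) - bvec lam πE (s, a)) ∂μ) + ∫ _x in E, bvec lam πE (s, a) ∂μ :=
        integral_add (hgi.sub (integrable_const _)) (integrable_const _)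
    _ = (μ E).toReal * bvec lam πE (s, a) := by rw [hzero, hconst, zero_add]
    _ = lam * Real.log (πE s a) * (μ E).toReal := by
        have : bvec lam πE (s, a) = lam * Real.log (πE s a) := rfl
        rw [this]
        ring

end S8
/-- the centroid of `𝒮R^{MCE}_M ∩ R^{MCE,S}_{M,π_E}`, after rescaling,
is `log π_E(a|s)`. -/
theorem statement8 {S A : Type} [Fintype S] [Fintype A] [DecidableEq S] [DecidableEq A]
    (lam C1 C2 : ℝ) (hlam : 0 < lam) (hC1 : 0 < C1) (hC2 : 0 < C2)
    (M : MDP S A) (πE : S → A → ℝ) (hπE : IsPolicy πE)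
    (πmin : ℝ) (hπmin : 0 < πmin) (hlb : ∀ s a, πmin ≤ πE s a)
    (hsupp : supp M πE = Set.univ)
    (hC2' : lam * Real.log (1 / πmin) ≤ C2) :
    ∃ α β : ℝ, 0 < α ∧ ∀ s a,
      α * (∫ x in (show Set (EuclideanSpace ℝ (S × A)) from WithLp.ofLp ⁻¹' (SRMCE M lam C1 C2 ∩ RMCE M lam πE)),
            x (s, a) ∂(μH[(Fintype.card S : ℝ)])) + β = Real.log (πE s a) := by
  obtain ⟨m, hm, hint⟩ := S8.centroid M πE hlam hC1 hπE hπmin hlb hC2'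
  refine ⟨(lam * m)⁻¹, 0, by positivity, fun s a => ?_⟩
  rw [hint s a, add_zero]
  field_simp
  try ring
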